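/- Let D = {z ∈ ℂ : |z| ≤ 1} be the closed unit disc and let S be the linear span in C(D) of the four functions 1, z ↦ z, z ↦ z̄, and z ↦ |z|². Then the Choquet boundary of S equals all of D. -/

import Mathlib

/-- The evaluation functional at a point, as an element of the dual of a subspace of `C(X, ℂ)`. -/
noncomputable def evalDual {X : Type*} [TopologicalSpace X] [CompactSpace X]
    (S : Submodule ℂ C(X, ℂ)) (x : X) : StrongDual ℂ ↥S :=
  LinearMap.mkContinuous
    { toFun := fun f => (f : C(X, ℂ)) x
      map_add' := fun f g => rfl
      map_smul' := fun c f => rfl }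
    1
    (fun f => by
      rw [one_mul]; exact ContinuousMap.norm_coe_le_norm (f : C(X, ℂ)) x)

/-- The Choquet boundary of a subspace `S` of `C(X, ℂ)`: the set of points `x ∈ X` such that
the evaluation functional at `x` is an extreme point of the closed unit ball of the dual of `S`. -/
noncomputable def ChoquetBoundary {X : Type*} [TopologicalSpace X] [CompactSpace X]
    (S : Submodule ℂ C(X, ℂ)) : Set X :=
  {x | evalDual S x ∈ Set.extremePoints ℝ (Metric.closedBall (0 : StrongDual ℂ ↥S) 1)}

instance : CompactSpace ↥(Metric.closedBall (0 : ℂ) 1) :=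
  isCompact_iff_compactSpace.mp (isCompact_closedBall _ _)

namespace ChoquetDisc

open Complex

abbrev X : Type := ↥(Metric.closedBall (0 : ℂ) 1)

noncomputable def f1 : C(X, ℂ) := 1
noncomputable def f2 : C(X, ℂ) := ⟨fun z => (z : ℂ), continuous_subtype_val⟩
noncomputable def f3 : C(X, ℂ) :=
  ⟨fun z => (starRingEnd ℂ) (z : ℂ), Complex.continuous_conj.comp continuous_subtype_val⟩
noncomputable def f4 : C(X, ℂ) :=
  ⟨fun z => ((‖(z : ℂ)‖ ^ 2 : ℝ) : ℂ),
    Complex.continuous_ofReal.comp ((continuous_norm.comp continuous_subtype_val).pow 2)⟩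

noncomputable def S : Submodule ℂ C(X, ℂ) := Submodule.span ℂ {f1, f2, f3, f4}

lemma mem1 : f1 ∈ S := Submodule.subset_span (Set.mem_insert _ _)
lemma mem2 : f2 ∈ S :=
  Submodule.subset_span (Set.mem_insert_of_mem _ (Set.mem_insert _ _))
lemma mem3 : f3 ∈ S :=
  Submodule.subset_span (Set.mem_insert_of_mem _ (Set.mem_insert_of_mem _ (Set.mem_insert _ _)))
lemma mem4 : f4 ∈ S :=
  Submodule.subset_span (Set.mem_insert_of_mem _ (Set.mem_insert_of_mem _
    (Set.mem_insert_of_mem _ rfl)))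

noncomputable def e1 : ↥S := ⟨f1, mem1⟩
noncomputable def e2 : ↥S := ⟨f2, mem2⟩
noncomputable def e3 : ↥S := ⟨f3, mem3⟩
noncomputable def e4 : ↥S := ⟨f4, mem4⟩

@[simp] lemma evalDual_apply {Y : Type*} [TopologicalSpace Y] [CompactSpace Y]
    (T : Submodule ℂ C(Y, ℂ)) (y : Y) (v : ↥T) : evalDual T y v = (v : C(Y, ℂ)) y := rfl

lemma norm_evalDual_le {Y : Type*} [TopologicalSpace Y] [CompactSpace Y]
    (T : Submodule ℂ C(Y, ℂ)) (y : Y) : ‖evalDual T y‖ ≤ 1 :=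
  LinearMap.mkContinuous_norm_le _ zero_le_one _

lemma normSq_expand (z w : ℂ) :
    ((normSq (z - w) : ℝ) : ℂ) =
      ((normSq z : ℝ) : ℂ) - (starRingEnd ℂ) w * z - w * (starRingEnd ℂ) z
        + ((normSq w : ℝ) : ℂ) := by
  rw [← Complex.mul_conj, ← Complex.mul_conj z, ← Complex.mul_conj w, map_sub]
  ring

/-- The element of `S` whose value at `z` is `|z - (c + l)|²`. -/
noncomputable def q (c l : ℂ) : ↥S :=
  e4 - ((starRingEnd ℂ) (c + l)) • e2 - (c + l) • e3 + ((normSq (c + l) : ℝ) : ℂ) • e1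

lemma q_apply (c l : ℂ) (z : X) :
    ((q c l : C(X, ℂ))) z = ((normSq ((z : ℂ) - (c + l)) : ℝ) : ℂ) := by
  simp only [q, e1, e2, e3, e4, Submodule.coe_add, Submodule.coe_sub, SetLike.val_smul,
    ContinuousMap.add_apply, ContinuousMap.sub_apply, ContinuousMap.smul_apply,
    ContinuousMap.coe_mk, f1, f2, f3, f4, ContinuousMap.one_apply, smul_eq_mul, mul_one]
  rw [normSq_expand, Complex.sq_norm]

/-- Strict convexity of the unit disc of `ℂ`. -/
lemma disc_extreme {a b : ℝ} {u v : ℂ} (ha : 0 < a) (hb : 0 < b) (hab : a + b = 1)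
    (hu : ‖u‖ ≤ 1) (hv : ‖v‖ ≤ 1) (h : a • u + b • v = 1) : u = 1 ∧ v = 1 := by
  have hur : u.re ≤ 1 := (Complex.re_le_norm u).trans hu
  have hvr : v.re ≤ 1 := (Complex.re_le_norm v).trans hv
  have hre : a * u.re + b * v.re = 1 := by
    have := congrArg Complex.re h
    simpa [Complex.real_smul] using this
  have hure : u.re = 1 := by nlinarith
  have hvre : v.re = 1 := by nlinarith
  have hnu : normSq u ≤ 1 := by
    rw [← Complex.sq_norm]
    nlinarith [norm_nonneg u, hu]
  have hnv : normSq v ≤ 1 := by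
    rw [← Complex.sq_norm]
    nlinarith [norm_nonneg v, hv]
  rw [Complex.normSq_apply, hure] at hnu
  rw [Complex.normSq_apply, hvre] at hnv
  constructor
  · exact Complex.ext (by simpa using hure) (by simp; nlinarith)
  · exact Complex.ext (by simpa using hvre) (by simp; nlinarith)

/-- A norm-one functional fixing the constant `1` takes real values on real-valued elements. -/
lemma im_eq_zero {φ : StrongDual ℂ ↥S} (hφ : ‖φ‖ ≤ 1) (hone : φ e1 = 1)
    (v : ↥S) (hv : ∀ z : X, ((v : C(X, ℂ)) z).im = 0) : (φ v).im = 0 := by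
  have hbound : ∀ t : ℝ, ‖v + ((t : ℂ) * Complex.I) • e1‖ ≤ Real.sqrt (‖v‖ ^ 2 + t ^ 2) := by
    intro t
    rw [Submodule.coe_norm]
    rw [ContinuousMap.norm_le _ (Real.sqrt_nonneg _)]
    intro z
    have hz : ((v + ((t : ℂ) * Complex.I) • e1 : ↥S) : C(X, ℂ)) z
        = ((v : C(X, ℂ)) z) + (t : ℂ) * Complex.I := by
      simp [e1, f1]
    rw [hz]
    have hre : ‖(v : C(X, ℂ)) z‖ ≤ ‖v‖ := by
      rw [Submodule.coe_norm]; exact ContinuousMap.norm_coe_le_norm _ z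
    have hsq : ‖(v : C(X, ℂ)) z + (t : ℂ) * Complex.I‖ ^ 2 ≤ ‖v‖ ^ 2 + t ^ 2 := by
      rw [Complex.sq_norm, Complex.normSq_apply]
      have him := hv z
      have h1 : ((v : C(X, ℂ)) z + (t : ℂ) * Complex.I).re = ((v : C(X, ℂ)) z).re := by simp
      have h2 : ((v : C(X, ℂ)) z + (t : ℂ) * Complex.I).im = t := by simp [him]
      rw [h1, h2]
      have : ((v : C(X, ℂ)) z).re ^ 2 ≤ ‖v‖ ^ 2 := by
        have habs : |((v : C(X, ℂ)) z).re| ≤ ‖v‖ :=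
          le_trans (Complex.abs_re_le_norm _) hre
        nlinarith [abs_nonneg ((v : C(X, ℂ)) z).re, _root_.sq_abs ((v : C(X, ℂ)) z).re]
      nlinarith
    have h0 : (0:ℝ) ≤ ‖v‖ ^ 2 + t ^ 2 := by positivity
    calc ‖(v : C(X, ℂ)) z + (t : ℂ) * Complex.I‖
        = Real.sqrt (‖(v : C(X, ℂ)) z + (t : ℂ) * Complex.I‖ ^ 2) := by
          rw [Real.sqrt_sq (norm_nonneg _)]
      _ ≤ Real.sqrt (‖v‖ ^ 2 + t ^ 2) := Real.sqrt_le_sqrt hsq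
  by_contra hb
  set a := (φ v).re with ha
  set b := (φ v).im with hbdef
  set t : ℝ := (‖v‖ ^ 2 + 1) / (2 * b) with ht
  have h1 : ‖φ (v + ((t : ℂ) * Complex.I) • e1)‖ ≤ Real.sqrt (‖v‖ ^ 2 + t ^ 2) :=
    le_trans (le_trans (φ.le_opNorm _) (mul_le_of_le_one_left (norm_nonneg _) hφ)) (hbound t)
  have h2 : φ (v + ((t : ℂ) * Complex.I) • e1) = φ v + (t : ℂ) * Complex.I := by
    rw [map_add, map_smul, hone, smul_eq_mul, mul_one]
  rw [h2] at h1
  have h3 : ‖φ v + (t : ℂ) * Complex.I‖ ^ 2 ≤ ‖v‖ ^ 2 + t ^ 2 := by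
    have hnn : (0:ℝ) ≤ ‖v‖ ^ 2 + t ^ 2 := by positivity
    calc ‖φ v + (t : ℂ) * Complex.I‖ ^ 2 ≤ Real.sqrt (‖v‖ ^ 2 + t ^ 2) ^ 2 := by
          apply sq_le_sq' _ h1
          linarith [norm_nonneg (φ v + (t : ℂ) * Complex.I), Real.sqrt_nonneg (‖v‖ ^ 2 + t ^ 2)]
      _ = ‖v‖ ^ 2 + t ^ 2 := Real.sq_sqrt hnn
  have h4 : ‖φ v + (t : ℂ) * Complex.I‖ ^ 2 = a ^ 2 + (b + t) ^ 2 := by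
    rw [Complex.sq_norm, Complex.normSq_apply]
    simp [ha, hbdef]
    ring
  rw [h4] at h3
  have hbt : 2 * b * t = ‖v‖ ^ 2 + 1 := by
    rw [ht]; field_simp
  nlinarith [sq_nonneg a, sq_nonneg b]

/-- A norm-one functional fixing `1` is positive on nonnegative real-valued elements. -/
lemma re_nonneg {φ : StrongDual ℂ ↥S} (hφ : ‖φ‖ ≤ 1) (hone : φ e1 = 1)
    (v : ↥S) (M : ℝ)
    (hv : ∀ z : X, ((v : C(X, ℂ)) z).im = 0 ∧ 0 ≤ ((v : C(X, ℂ)) z).re ∧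
      ((v : C(X, ℂ)) z).re ≤ M) : 0 ≤ (φ v).re := by
  have z0 : X := ⟨0, by simp⟩
  have hM : 0 ≤ M := le_trans (hv z0).2.1 (hv z0).2.2
  have hnorm : ‖v - (M : ℂ) • e1‖ ≤ M := by
    rw [Submodule.coe_norm, ContinuousMap.norm_le _ hM]
    intro z
    have hz : ((v - (M : ℂ) • e1 : ↥S) : C(X, ℂ)) z = ((v : C(X, ℂ)) z) - (M : ℂ) := by
      simp [e1, f1]
    rw [hz]
    have hval : ((v : C(X, ℂ)) z) - (M : ℂ) = ((((v : C(X, ℂ)) z).re - M : ℝ) : ℂ) :=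
      Complex.ext (by simp) (by simp [(hv z).1])
    rw [hval, Complex.norm_real, Real.norm_eq_abs]
    rw [abs_le]
    exact ⟨by linarith [(hv z).2.1], by linarith [(hv z).2.2, hM]⟩
  have h1 : ‖φ (v - (M : ℂ) • e1)‖ ≤ M :=
    le_trans (le_trans (φ.le_opNorm _) (mul_le_of_le_one_left (norm_nonneg _) hφ)) hnorm
  have h2 : φ (v - (M : ℂ) • e1) = φ v - (M : ℂ) := by
    rw [map_sub, map_smul, hone, smul_eq_mul, mul_one]
  rw [h2] at h1
  have h3 : M - (φ v).re ≤ ‖φ v - (M : ℂ)‖ := by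
    have : ((M : ℂ) - φ v).re ≤ ‖(M : ℂ) - φ v‖ := Complex.re_le_norm _
    rw [Complex.sub_re, Complex.ofReal_re] at this
    calc M - (φ v).re ≤ ‖(M : ℂ) - φ v‖ := this
      _ = ‖φ v - (M : ℂ)‖ := by rw [← norm_neg]; rw [neg_sub]
  linarith

lemma eq_evalDual (x : X) {φ : StrongDual ℂ ↥S} (hφ : ‖φ‖ ≤ 1)
    (hone : φ e1 = 1) (hq0 : φ (q (x : ℂ) 0) = 0) : φ = evalDual S x := by
  set c : ℂ := (x : ℂ) with hcdef
  have hc : ‖c‖ ≤ 1 := by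
    have := x.2
    rwa [Metric.mem_closedBall, dist_zero_right] at this
  set P := φ e2 with hPdef
  set Q := φ e3 with hQdef
  set T := φ e4 with hTdef
  have hq0' : T - (starRingEnd ℂ) c * P - c * Q + ((normSq c : ℝ) : ℂ) = 0 := by
    have h := hq0
    simp only [q, add_zero, map_add, map_sub, map_smul, hone, smul_eq_mul, mul_one] at h
    exact h
  -- conjugate symmetry : Q = conj P
  have hsum : (P + Q).im = 0 := by
    have h := im_eq_zero hφ hone (e2 + e3) (fun z => by
      simp [e2, e3, f2, f3])
    rwa [map_add] at h
  have hdiff : (P - Q).re = 0 := by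
    have h := im_eq_zero hφ hone (Complex.I • (e2 - e3)) (fun z => by
      simp [e2, e3, f2, f3, Complex.sub_re, Complex.sub_im])
    rw [map_smul, map_sub, smul_eq_mul, Complex.mul_im, Complex.I_re, Complex.I_im] at h
    simpa using h
  have hQ : Q = (starRingEnd ℂ) P := by
    apply Complex.ext
    · rw [Complex.conj_re]
      have h := hdiff
      rw [Complex.sub_re] at h
      linarith
    · rw [Complex.conj_im]
      have h := hsum
      rw [Complex.add_im] at h
      linarith
  rw [hQ] at hq0'
  have hT' : T = (starRingEnd ℂ) c * P + c * (starRingEnd ℂ) P - ((normSq c : ℝ) : ℂ) := by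
    linear_combination hq0'
  -- positivity applied to the peaked quadratic at `λ = (P - c)/2`
  set A : ℂ := P - c with hAdef
  have hpt : ∀ z : X, (((q c (A / 2) : ↥S) : C(X, ℂ)) z).im = 0 ∧
      0 ≤ (((q c (A / 2) : ↥S) : C(X, ℂ)) z).re ∧
      (((q c (A / 2) : ↥S) : C(X, ℂ)) z).re ≤ (2 + ‖A / 2‖) ^ 2 := by
    intro z
    rw [q_apply]
    refine ⟨by simp, by simp [normSq_nonneg], ?_⟩
    rw [Complex.ofReal_re, ← Complex.sq_norm]
    have hz : ‖(z : ℂ)‖ ≤ 1 := by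
      have := z.2
      rwa [Metric.mem_closedBall, dist_zero_right] at this
    have htri : ‖(z : ℂ) - (c + A / 2)‖ ≤ 2 + ‖A / 2‖ := by
      calc ‖(z : ℂ) - (c + A / 2)‖
          ≤ ‖(z : ℂ)‖ + ‖c + A / 2‖ := by
            simpa using norm_sub_le (z : ℂ) (c + A / 2)
        _ ≤ ‖(z : ℂ)‖ + (‖c‖ + ‖A / 2‖) := by
            have := norm_add_le c (A / 2); linarith
        _ ≤ 2 + ‖A / 2‖ := by linarith
    exact pow_le_pow_left₀ (norm_nonneg _) htri 2
  have hqval : φ (q c (A / 2)) = T - (starRingEnd ℂ) (c + A / 2) * P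
      - (c + A / 2) * Q + ((normSq (c + A / 2) : ℝ) : ℂ) := by
    simp only [q, map_add, map_sub, map_smul, hone, smul_eq_mul, mul_one]
    rfl
  have hqval2 : φ (q c (A / 2)) = ((-(3 / 4) * normSq A : ℝ) : ℂ) := by
    rw [hqval, hQ, hT']
    push_cast
    rw [← Complex.mul_conj c, ← Complex.mul_conj (c + A / 2), ← Complex.mul_conj A]
    simp only [map_add, map_sub, map_div₀, hAdef, Complex.conj_ofNat]
    ring
  have hpos := re_nonneg hφ hone (q c (A / 2)) ((2 + ‖A / 2‖) ^ 2) hpt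
  rw [hqval2, Complex.ofReal_re] at hpos
  have hA0 : A = 0 := by
    rw [← Complex.normSq_eq_zero]
    have := normSq_nonneg A
    linarith
  have hPc : P = c := by rwa [hAdef, sub_eq_zero] at hA0
  have hQc : Q = (starRingEnd ℂ) c := by rw [hQ, hPc]
  have hTc : T = ((normSq c : ℝ) : ℂ) := by
    rw [hT', hPc, ← Complex.mul_conj c]
    ring
  -- conclude
  apply ContinuousLinearMap.ext
  rintro ⟨f, hf⟩
  refine Submodule.span_induction
    (p := fun f hf => φ ⟨f, hf⟩ = evalDual S x ⟨f, hf⟩) ?_ ?_ ?_ ?_ hf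
  · rintro g (rfl | rfl | rfl | rfl)
    · show φ e1 = evalDual S x e1
      rw [hone, evalDual_apply]
      simp [e1, f1]
    · show φ e2 = evalDual S x e2
      rw [← hPdef, hPc, evalDual_apply]
      simp only [e2, f2, ContinuousMap.coe_mk]
      rfl
    · show φ e3 = evalDual S x e3
      rw [← hQdef, hQc, evalDual_apply]
      simp only [e3, f3, ContinuousMap.coe_mk]
      rfl
    · show φ e4 = evalDual S x e4
      rw [← hTdef, hTc, evalDual_apply]
      simp only [e4, f4, ContinuousMap.coe_mk, Complex.sq_norm]
      rfl
  · show φ (0 : ↥S) = evalDual S x (0 : ↥S)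
    simp
  · intro u v hu hv hu' hv'
    show φ (⟨u, hu⟩ + ⟨v, hv⟩) = evalDual S x (⟨u, hu⟩ + ⟨v, hv⟩)
    rw [map_add, map_add, hu', hv']
  · intro r u hu hu'
    show φ (r • ⟨u, hu⟩) = evalDual S x (r • ⟨u, hu⟩)
    rw [map_smul, map_smul, hu']

lemma key : ChoquetBoundary S = Set.univ := by
  rw [Set.eq_univ_iff_forall]
  intro x
  rw [ChoquetBoundary, Set.mem_setOf_eq, mem_extremePoints]
  set c : ℂ := (x : ℂ) with hcdef
  constructor
  · refine Metric.mem_closedBall.mpr ((dist_zero_right (evalDual S x)).trans_le ?_)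
    exact norm_evalDual_le S x
  · rintro φ hφ ψ hψ ⟨a, b, ha, hb, hab, hsum⟩
    replace hφ : ‖φ‖ ≤ 1 := (dist_zero_right φ).symm.trans_le (Metric.mem_closedBall.mp hφ)
    replace hψ : ‖ψ‖ ≤ 1 := (dist_zero_right ψ).symm.trans_le (Metric.mem_closedBall.mp hψ)
    have heval : ∀ v : ↥S, a • φ v + b • ψ v = (v : C(X, ℂ)) x := by
      intro v
      have := congrArg (fun F : StrongDual ℂ ↥S => F v) hsum
      simpa using this
    have hle : ∀ (ρ : StrongDual ℂ ↥S), ‖ρ‖ ≤ 1 → ∀ v : ↥S, ‖ρ v‖ ≤ ‖(v : C(X, ℂ))‖ := by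
      intro ρ hρ v
      calc ‖ρ v‖ ≤ ‖ρ‖ * ‖v‖ := ρ.le_opNorm v
        _ ≤ ‖v‖ := mul_le_of_le_one_left (norm_nonneg _) hρ
        _ = ‖(v : C(X, ℂ))‖ := Submodule.coe_norm v
    -- value at the constant 1
    have he1norm : ‖(e1 : C(X, ℂ))‖ ≤ 1 := by
      rw [ContinuousMap.norm_le _ zero_le_one]
      intro z; simp [e1, f1]
    have he1 : a • φ e1 + b • ψ e1 = 1 := by
      rw [heval e1]; simp [e1, f1]
    obtain ⟨hφ1, hψ1⟩ := disc_extreme ha hb hab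
      (le_trans (hle φ hφ e1) he1norm) (le_trans (hle ψ hψ e1) he1norm) he1
    -- value at the peak function g = 1 - |z - c|²/4
    set g : ↥S := e1 - (1 / 4 : ℂ) • q c 0 with hg
    have hgapply : ∀ z : X, ((g : ↥S) : C(X, ℂ)) z
        = ((1 - normSq ((z : ℂ) - c) / 4 : ℝ) : ℂ) := by
      intro z
      have : ((g : ↥S) : C(X, ℂ)) z = 1 - (1 / 4 : ℂ) * ((q c 0 : ↥S) : C(X, ℂ)) z := by
        simp [hg, e1, f1]
      rw [this, q_apply]
      push_cast
      ring_nf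
    have hgnorm : ‖(g : C(X, ℂ))‖ ≤ 1 := by
      rw [ContinuousMap.norm_le _ zero_le_one]
      intro z
      rw [hgapply z, Complex.norm_real, Real.norm_eq_abs, abs_le]
      have hz : ‖(z : ℂ)‖ ≤ 1 := by
        have := z.2
        rwa [Metric.mem_closedBall, dist_zero_right] at this
      have hc : ‖c‖ ≤ 1 := by
        have := x.2
        rwa [Metric.mem_closedBall, dist_zero_right] at this
      have hub : normSq ((z : ℂ) - c) ≤ 4 := by
        have h2 : ‖(z : ℂ) - c‖ ≤ 2 := by
          calc ‖(z : ℂ) - c‖ ≤ ‖(z : ℂ)‖ + ‖c‖ := by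
                simpa using norm_sub_le (z : ℂ) c
            _ ≤ 2 := by linarith
        calc normSq ((z : ℂ) - c) = ‖(z : ℂ) - c‖ ^ 2 := (Complex.sq_norm _).symm
          _ ≤ 2 ^ 2 := by
              exact pow_le_pow_left₀ (norm_nonneg _) h2 2
          _ = 4 := by norm_num
      have hlb : 0 ≤ normSq ((z : ℂ) - c) := normSq_nonneg _
      constructor <;> [linarith; linarith]
    have hgx : a • φ g + b • ψ g = 1 := by
      rw [heval g, hgapply x]
      simp [hcdef]
    obtain ⟨hφg, hψg⟩ := disc_extreme ha hb hab
      (le_trans (hle φ hφ g) hgnorm) (le_trans (hle ψ hψ g) hgnorm) hgx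
    -- deduce φ (q c 0) = 0 and likewise for ψ
    have hq : ∀ (ρ : StrongDual ℂ ↥S), ρ e1 = 1 → ρ g = 1 → ρ (q c 0) = 0 := by
      intro ρ h1 h2
      have : ρ g = ρ e1 - (1 / 4 : ℂ) * ρ (q c 0) := by
        rw [hg, map_sub, map_smul, smul_eq_mul]
      rw [h1, h2] at this
      linear_combination 4 * this
    have hφq := hq φ hφ1 hφg
    have hψq := hq ψ hψ1 hψg
    exact ⟨eq_evalDual x hφ hφ1 hφq, eq_evalDual x hψ hψ1 hψq⟩

end ChoquetDisc

/-- The Choquet boundary of `span {1, z, z̄, |z|²} ⊆ C(D)` is all of the closed unit disc `D`. -/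
theorem choquet_boundary_disc_span :
    ChoquetBoundary (Submodule.span ℂ
      ({1,
        ⟨fun z => (z : ℂ), continuous_subtype_val⟩,
        ⟨fun z => (starRingEnd ℂ) (z : ℂ), Complex.continuous_conj.comp continuous_subtype_val⟩,
        ⟨fun z => ((‖(z : ℂ)‖ ^ 2 : ℝ) : ℂ),
         Complex.continuous_ofReal.comp ((continuous_norm.comp continuous_subtype_val).pow 2)⟩} :
          Set C(↥(Metric.closedBall (0 : ℂ) 1), ℂ))) = Set.univ :=
  ChoquetDisc.key
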